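/- For the quartic objective f(x) = (1/2) Σ_{i=1}^m (x^H A_i x)^2 with Hermitian A_i, every local maximizer x of f over the unit sphere of ℂ^n satisfies H(x)x = λx with H(x) = Σ_i (x^H A_i x) A_i and λ = λ_max(H(x)) = 2 f(x). -/

import Mathlib

open Matrix BigOperators Filter Topology


/-- The quartic objective `f(x) = (1/2) ∑ i, (xᴴ A_i x)²`. -/
noncomputable def quartF {n m : ℕ} (A : Fin m → Matrix (Fin n) (Fin n) ℂ)
    (x : Fin n → ℂ) : ℝ :=
  (1 / 2) * ∑ i, ((star x ⬝ᵥ (A i).mulVec x).re) ^ 2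

/-- `H(x) = ∑ i, (xᴴ A_i x) • A_i`. -/
noncomputable def Hquart {n m : ℕ} (A : Fin m → Matrix (Fin n) (Fin n) ℂ)
    (x : Fin n → ℂ) : Matrix (Fin n) (Fin n) ℂ :=
  ∑ i, (((star x ⬝ᵥ (A i).mulVec x).re : ℝ) : ℂ) • A i

/-- Euclidean normalization of a vector in `ℂ^n`. -/
noncomputable def normz {n : ℕ} (y : Fin n → ℂ) : Fin n → ℂ :=
  ((Real.sqrt ((star y ⬝ᵥ y).re) : ℂ))⁻¹ • y

lemma herm_flip {n : ℕ} {M : Matrix (Fin n) (Fin n) ℂ} (hM : M.IsHermitian)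
    (u v : Fin n → ℂ) : star u ⬝ᵥ M.mulVec v = star (star v ⬝ᵥ M.mulVec u) := by
  simp only [dotProduct, mulVec, dotProduct, star_sum, star_mul', Finset.mul_sum]
  rw [Finset.sum_comm]
  refine Finset.sum_congr rfl fun j _ => Finset.sum_congr rfl fun k _ => ?_
  have h1 : star (M k j) = M j k := congrFun (congrFun hM j) k
  have h2 : M k j = star (M j k) := by rw [← h1, star_star]
  simp only [Pi.star_apply, h2, RingHom.coe_coe]
  ring_nf
  simp [star_star]

lemma herm_self_real {n : ℕ} {M : Matrix (Fin n) (Fin n) ℂ} (hM : M.IsHermitian)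
    (v : Fin n → ℂ) : star v ⬝ᵥ M.mulVec v = (((star v ⬝ᵥ M.mulVec v).re : ℝ) : ℂ) :=
  (Complex.conj_eq_iff_re.mp (herm_flip hM v v).symm).symm

lemma dot_self_re {n : ℕ} (u : Fin n → ℂ) :
    star u ⬝ᵥ u = ((∑ k, Complex.normSq (u k) : ℝ) : ℂ) := by
  push_cast
  simp [dotProduct, Complex.normSq_eq_conj_mul_self]

lemma nu_nonneg {n : ℕ} (u : Fin n → ℂ) : 0 ≤ (star u ⬝ᵥ u).re := by
  rw [dot_self_re]
  simp only [Complex.ofReal_re]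
  exact Finset.sum_nonneg fun k _ => Complex.normSq_nonneg _

lemma eq_zero_of_nu {n : ℕ} (u : Fin n → ℂ) (h : (star u ⬝ᵥ u).re = 0) : u = 0 := by
  rw [dot_self_re] at h
  simp only [Complex.ofReal_re] at h
  funext k
  have := (Finset.sum_eq_zero_iff_of_nonneg
    (fun k _ => Complex.normSq_nonneg (u k))).mp h k (Finset.mem_univ k)
  exact Complex.normSq_eq_zero.mp this

lemma nu_pos {n : ℕ} (u : Fin n → ℂ) (hu : u ≠ 0) : 0 < (star u ⬝ᵥ u).re :=
  lt_of_le_of_ne (nu_nonneg u) (fun h => hu (eq_zero_of_nu u h.symm))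

lemma dot_expand {n : ℕ} {M : Matrix (Fin n) (Fin n) ℂ} (hM : M.IsHermitian)
    (x u : Fin n → ℂ) (t : ℝ) :
    (star (x + (t:ℂ) • u) ⬝ᵥ M.mulVec (x + (t:ℂ) • u)).re
      = (star x ⬝ᵥ M.mulVec x).re + t * (2 * (star u ⬝ᵥ M.mulVec x).re)
        + t^2 * (star u ⬝ᵥ M.mulVec u).re := by
  have hflip := herm_flip hM x u
  simp only [star_add, star_smul, add_dotProduct, dotProduct_add, mulVec_add, mulVec_smul,
    smul_dotProduct, dotProduct_smul, Complex.star_def, Complex.conj_ofReal, smul_eq_mul,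
    hflip]
  simp [Complex.add_re, Complex.mul_re, Complex.ofReal_re, Complex.ofReal_im]
  ring

lemma norm_expand {n : ℕ} (x u : Fin n → ℂ) (hx : star x ⬝ᵥ x = 1)
    (hu : star u ⬝ᵥ x = 0) (t : ℝ) :
    (star (x + (t:ℂ) • u) ⬝ᵥ (x + (t:ℂ) • u)).re = 1 + t^2 * (star u ⬝ᵥ u).re := by
  have hxu : star x ⬝ᵥ u = 0 := by
    rw [star_dotProduct, hu]; simp
  simp only [star_add, star_smul, add_dotProduct, dotProduct_add,
    smul_dotProduct, dotProduct_smul, Complex.star_def, Complex.conj_ofReal, smul_eq_mul,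
    hx, hxu, hu, mul_zero, add_zero, zero_add]
  simp [Complex.add_re, Complex.mul_re, Complex.ofReal_re, Complex.ofReal_im]
  ring

lemma quart_normz {n m : ℕ} (A : Fin m → Matrix (Fin n) (Fin n) ℂ) (y : Fin n → ℂ)
    (hy : 0 < (star y ⬝ᵥ y).re) :
    quartF A (normz y) = (1/2) * ∑ i,
      ((star y ⬝ᵥ (A i).mulVec y).re)^2 / ((star y ⬝ᵥ y).re)^2 := by
  unfold quartF normz
  congr 1
  refine Finset.sum_congr rfl fun i _ => ?_
  set N := (star y ⬝ᵥ y).re with hN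
  have hr : Real.sqrt N ≠ 0 := ne_of_gt (Real.sqrt_pos.mpr hy)
  have : star ((((Real.sqrt N : ℝ) : ℂ))⁻¹ • y) ⬝ᵥ (A i).mulVec ((((Real.sqrt N : ℝ) : ℂ))⁻¹ • y)
      = (((Real.sqrt N)⁻¹ * (Real.sqrt N)⁻¹ : ℝ) : ℂ) * (star y ⬝ᵥ (A i).mulVec y) := by
    simp only [star_smul, smul_dotProduct, mulVec_smul, dotProduct_smul, smul_eq_mul,
      Complex.star_def, map_inv₀, Complex.conj_ofReal]
    push_cast
    ring
  rw [this]
  have hre : ((((Real.sqrt N)⁻¹ * (Real.sqrt N)⁻¹ : ℝ) : ℂ) * (star y ⬝ᵥ (A i).mulVec y)).re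
      = ((Real.sqrt N)⁻¹ * (Real.sqrt N)⁻¹) * (star y ⬝ᵥ (A i).mulVec y).re := by
    simp [Complex.mul_re, Complex.ofReal_re, Complex.ofReal_im]
  rw [hre]
  have hN2 : Real.sqrt N * Real.sqrt N = N := Real.mul_self_sqrt hy.le
  field_simp
  rw [show Real.sqrt N ^ 4 = (Real.sqrt N * Real.sqrt N) ^ 2 by ring, hN2]
  ring

lemma sum_sq_expand {m : ℕ} (c b e : Fin m → ℝ) (t : ℝ) :
    ∑ i, (c i + t*b i + t^2*e i)^2
      = (∑ i, (c i)^2) + t*(2*∑ i, c i*b i)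
        + t^2*((∑ i, (b i)^2) + 2*∑ i, c i*e i)
        + t^3*(2*∑ i, b i*e i) + t^4*(∑ i, (e i)^2) := by
  simp only [Finset.mul_sum, ← Finset.sum_add_distrib]
  exact Finset.sum_congr rfl fun i _ => by ring

lemma coeff_facts (a₁ a₂ a₃ a₄ ε : ℝ) (hε : 0 < ε)
    (h : ∀ t : ℝ, |t| ≤ ε → 0 ≤ a₁*t + a₂*t^2 + a₃*t^3 + a₄*t^4) :
    a₁ = 0 ∧ 0 ≤ a₂ := by
  have hgc : Continuous (fun t : ℝ => a₁ + a₂*t + a₃*t^2 + a₄*t^3) := by continuity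
  have hR : Tendsto (fun t : ℝ => a₁ + a₂*t + a₃*t^2 + a₄*t^3) (𝓝[>] 0)
      (𝓝 (a₁ + a₂*0 + a₃*0^2 + a₄*0^3)) :=
    (hgc.tendsto 0).mono_left nhdsWithin_le_nhds
  have hL : Tendsto (fun t : ℝ => a₁ + a₂*t + a₃*t^2 + a₄*t^3) (𝓝[<] 0)
      (𝓝 (a₁ + a₂*0 + a₃*0^2 + a₄*0^3)) :=
    (hgc.tendsto 0).mono_left nhdsWithin_le_nhds
  have h1 : 0 ≤ a₁ + a₂*0 + a₃*0^2 + a₄*0^3 := by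
    refine ge_of_tendsto hR ?_
    filter_upwards [Ioc_mem_nhdsGT_of_mem ⟨le_refl (0:ℝ), hε⟩] with t ht
    have habs : |t| ≤ ε := by rw [abs_of_pos ht.1]; exact ht.2
    have := h t habs
    nlinarith [ht.1, mul_pos ht.1 ht.1]
  have h2 : a₁ + a₂*0 + a₃*0^2 + a₄*0^3 ≤ 0 := by
    refine le_of_tendsto hL ?_
    filter_upwards [Ico_mem_nhdsLT_of_mem ⟨neg_lt_zero.mpr hε, le_refl (0:ℝ)⟩] with t ht
    have htneg : t < 0 := ht.2
    have habs : |t| ≤ ε := by rw [abs_of_neg htneg]; linarith [ht.1]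
    have := h t habs
    nlinarith [mul_pos (neg_pos.mpr htneg) (neg_pos.mpr htneg)]
  have ha1 : a₁ = 0 := by simp at h1 h2; linarith
  refine ⟨ha1, ?_⟩
  have hgc2 : Continuous (fun t : ℝ => a₂ + a₄*t^2) := by continuity
  have hR2 : Tendsto (fun t : ℝ => a₂ + a₄*t^2) (𝓝[>] 0) (𝓝 (a₂ + a₄*0^2)) :=
    (hgc2.tendsto 0).mono_left nhdsWithin_le_nhds
  have h3 : 0 ≤ a₂ + a₄*0^2 := by
    refine ge_of_tendsto hR2 ?_
    filter_upwards [Ioc_mem_nhdsGT_of_mem ⟨le_refl (0:ℝ), hε⟩] with t ht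
    have habs : |t| ≤ ε := by rw [abs_of_pos ht.1]; exact ht.2
    have habs' : |(-t)| ≤ ε := by rwa [abs_neg]
    have hp := h t habs
    have hm := h (-t) habs'
    nlinarith [mul_pos ht.1 ht.1]
  simpa using h3

lemma key_ineq {n m : ℕ} (A : Fin m → Matrix (Fin n) (Fin n) ℂ)
    (hA : ∀ i, (A i).IsHermitian)
    (x : Fin n → ℂ) (hx : star x ⬝ᵥ x = 1) (ε : ℝ) (hε : 0 < ε)
    (hmax : ∀ d : Fin n → ℂ, star d ⬝ᵥ x = 0 →
        Real.sqrt ((star d ⬝ᵥ d).re) ≤ ε →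
        quartF A (normz (x + d)) ≤ quartF A x)
    (u : Fin n → ℂ) (hu : star u ⬝ᵥ x = 0) :
    (∑ i, (star x ⬝ᵥ (A i).mulVec x).re * (2 * (star u ⬝ᵥ (A i).mulVec x).re) = 0) ∧
    ((∑ i, (2 * (star u ⬝ᵥ (A i).mulVec x).re)^2)
        + 2 * ∑ i, (star x ⬝ᵥ (A i).mulVec x).re * (star u ⬝ᵥ (A i).mulVec u).re
      ≤ 2 * (∑ i, ((star x ⬝ᵥ (A i).mulVec x).re)^2) * (star u ⬝ᵥ u).re) := by
  by_cases hu0 : u = 0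
  · subst hu0
    simp [mulVec_zero, dotProduct_zero]
  set c : Fin m → ℝ := fun i => (star x ⬝ᵥ (A i).mulVec x).re with hc
  set b : Fin m → ℝ := fun i => 2 * (star u ⬝ᵥ (A i).mulVec x).re with hb
  set e : Fin m → ℝ := fun i => (star u ⬝ᵥ (A i).mulVec u).re with he
  set ν : ℝ := (star u ⬝ᵥ u).re with hν
  have hνpos : 0 < ν := nu_pos u hu0
  have hsν : 0 < Real.sqrt ν := Real.sqrt_pos.mpr hνpos
  set a₁ : ℝ := -(2 * ∑ i, c i * b i) with ha₁
  set a₂ : ℝ := 2 * (∑ i, (c i)^2) * ν - (∑ i, (b i)^2) - 2 * ∑ i, c i * e i with ha₂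
  set a₃ : ℝ := -(2 * ∑ i, b i * e i) with ha₃
  set a₄ : ℝ := (∑ i, (c i)^2) * ν^2 - ∑ i, (e i)^2 with ha₄
  have hpoly : ∀ t : ℝ, |t| ≤ ε / Real.sqrt ν →
      0 ≤ a₁*t + a₂*t^2 + a₃*t^3 + a₄*t^4 := by
    intro t ht
    set d : Fin n → ℂ := (t : ℂ) • u with hd
    have hd1 : star d ⬝ᵥ x = 0 := by
      simp [hd, star_smul, smul_dotProduct, hu]
    have hd2 : (star d ⬝ᵥ d).re = t^2 * ν := by
      simp only [hd, star_smul, smul_dotProduct, dotProduct_smul, smul_eq_mul,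
        Complex.star_def, Complex.conj_ofReal, hν]
      simp [Complex.mul_re, Complex.ofReal_re, Complex.ofReal_im]
      ring
    have hd3 : Real.sqrt ((star d ⬝ᵥ d).re) ≤ ε := by
      rw [hd2, Real.sqrt_mul (sq_nonneg t), Real.sqrt_sq_eq_abs]
      calc |t| * Real.sqrt ν ≤ (ε / Real.sqrt ν) * Real.sqrt ν :=
            mul_le_mul_of_nonneg_right ht hsν.le
        _ = ε := by field_simp
    have hle := hmax d hd1 hd3
    set N : ℝ := 1 + t^2 * ν with hN
    have hNpos : 0 < N := by nlinarith [sq_nonneg t]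
    have hyN : (star (x + d) ⬝ᵥ (x + d)).re = N := norm_expand x u hx hu t
    have hNpos' : 0 < (star (x + d) ⬝ᵥ (x + d)).re := by rw [hyN]; exact hNpos
    have h1 : quartF A (normz (x + d)) = (1/2) * ((∑ i, (c i + t * b i + t^2 * e i)^2) / N^2) := by
      rw [quart_normz A (x + d) hNpos', ← Finset.sum_div]
      congr 1
      congr 1
      · refine Finset.sum_congr rfl fun i _ => ?_
        rw [dot_expand (hA i) x u t]
      · rw [hyN]
    have hqx : quartF A x = (1/2) * ∑ i, (c i)^2 := by
      simp only [quartF, hc]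
    rw [h1, hqx] at hle
    have hN2 : (0:ℝ) < N^2 := by positivity
    have h2 : (∑ i, (c i + t * b i + t^2 * e i)^2) ≤ (∑ i, (c i)^2) * N^2 := by
      rw [← div_le_iff₀ hN2]
      linarith
    have hexp := sum_sq_expand c b e t
    have hid : a₁*t + a₂*t^2 + a₃*t^3 + a₄*t^4
        = (∑ i, (c i)^2) * N^2 - ∑ i, (c i + t * b i + t^2 * e i)^2 := by
      rw [hexp, hN, ha₁, ha₂, ha₃, ha₄]
      ring
    rw [hid]
    linarith
  obtain ⟨h1, h2⟩ := coeff_facts a₁ a₂ a₃ a₄ (ε / Real.sqrt ν) (div_pos hε hsν) hpoly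
  constructor
  · have : ∑ i, c i * b i = 0 := by rw [ha₁] at h1; linarith
    simpa [hc, hb] using this
  · rw [ha₂] at h2
    have : (∑ i, (b i)^2) + 2 * ∑ i, c i * e i ≤ 2 * (∑ i, (c i)^2) * ν := by linarith
    simpa [hc, hb, he, hν] using this

section Test
variable {n m : ℕ}

lemma dot_sum {n m : ℕ} (u : Fin n → ℂ) (f : Fin m → Fin n → ℂ) :
    u ⬝ᵥ (∑ i, f i) = ∑ i, u ⬝ᵥ f i := by
  simp only [dotProduct, Finset.sum_apply, Finset.mul_sum]
  exact Finset.sum_comm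

lemma sum_smul_mulVec (c : Fin m → ℂ) (M : Fin m → Matrix (Fin n) (Fin n) ℂ)
    (v : Fin n → ℂ) : ((∑ i, c i • M i).mulVec v) = ∑ i, c i • ((M i).mulVec v) := by
  ext k
  simp only [mulVec, dotProduct, Matrix.sum_apply, Matrix.smul_apply, Finset.sum_apply,
    Pi.smul_apply, smul_eq_mul, Finset.sum_mul, Finset.mul_sum]
  rw [Finset.sum_comm]
  exact Finset.sum_congr rfl fun i _ => Finset.sum_congr rfl fun j _ => by ring

lemma Hquart_mulVec (A : Fin m → Matrix (Fin n) (Fin n) ℂ) (x v : Fin n → ℂ) :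
    (Hquart A x).mulVec v
      = ∑ i, (((star x ⬝ᵥ (A i).mulVec x).re : ℝ) : ℂ) • ((A i).mulVec v) := by
  unfold Hquart
  rw [sum_smul_mulVec]

lemma Hquart_dot (A : Fin m → Matrix (Fin n) (Fin n) ℂ) (x u v : Fin n → ℂ) :
    star u ⬝ᵥ (Hquart A x).mulVec v
      = ∑ i, (((star x ⬝ᵥ (A i).mulVec x).re : ℝ) : ℂ) * (star u ⬝ᵥ (A i).mulVec v) := by
  rw [Hquart_mulVec, dot_sum]
  exact Finset.sum_congr rfl fun i _ => by rw [dotProduct_smul, smul_eq_mul]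

lemma Hquart_dot_re (A : Fin m → Matrix (Fin n) (Fin n) ℂ) (x u v : Fin n → ℂ) :
    (star u ⬝ᵥ (Hquart A x).mulVec v).re
      = ∑ i, (star x ⬝ᵥ (A i).mulVec x).re * (star u ⬝ᵥ (A i).mulVec v).re := by
  rw [Hquart_dot, Complex.re_sum]
  exact Finset.sum_congr rfl fun i _ => by
    simp [Complex.mul_re, Complex.ofReal_re, Complex.ofReal_im]

lemma Hquart_herm (A : Fin m → Matrix (Fin n) (Fin n) ℂ)
    (hA : ∀ i, (A i).IsHermitian) (x : Fin n → ℂ) : (Hquart A x).IsHermitian := by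
  unfold Matrix.IsHermitian Hquart
  rw [conjTranspose_sum]
  exact Finset.sum_congr rfl fun i _ => by
    rw [conjTranspose_smul, (hA i).eq]
    simp [Complex.star_def, Complex.conj_ofReal]

end Test


theorem stmt8 {n m : ℕ}
    (A : Fin m → Matrix (Fin n) (Fin n) ℂ) (hA : ∀ i, (A i).IsHermitian)
    (x : Fin n → ℂ) (hx : star x ⬝ᵥ x = 1)
    (hmax : ∃ ε > 0, ∀ d : Fin n → ℂ, star d ⬝ᵥ x = 0 →
        Real.sqrt ((star d ⬝ᵥ d).re) ≤ ε →
        quartF A (normz (x + d)) ≤ quartF A x) :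
    ∃ lam : ℝ, (Hquart A x).mulVec x = (lam : ℂ) • x ∧
      (∀ (μ : ℝ) (y : Fin n → ℂ), y ≠ 0 →
        (Hquart A x).mulVec y = (μ : ℂ) • y → μ ≤ lam) ∧
      lam = 2 * quartF A x := by
  obtain ⟨ε, hε, hmax⟩ := hmax
  have hkey := fun u hu => key_ineq A hA x hx ε hε hmax u hu
  set lam : ℝ := ∑ i, ((star x ⬝ᵥ (A i).mulVec x).re)^2 with hlam
  have hxHx : star x ⬝ᵥ (Hquart A x).mulVec x = ((lam : ℝ) : ℂ) := by
    rw [Hquart_dot, hlam]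
    push_cast
    exact Finset.sum_congr rfl fun i _ => by
      rw [← herm_self_real (hA i) x]; ring
  have hHxx : (Hquart A x).mulVec x = (lam : ℂ) • x := by
    set w : Fin n → ℂ := (Hquart A x).mulVec x - (lam : ℂ) • x with hw
    have hxw : star x ⬝ᵥ w = 0 := by
      rw [hw, dotProduct_sub, hxHx, dotProduct_smul, hx, smul_eq_mul, mul_one, sub_self]
    have hwx : star w ⬝ᵥ x = 0 := by rw [star_dotProduct, hxw, star_zero]
    have h1 := (hkey w hwx).1
    have h2 : (star w ⬝ᵥ (Hquart A x).mulVec x).re = 0 := by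
      rw [Hquart_dot_re]
      have h3 : ∑ i, (star x ⬝ᵥ (A i).mulVec x).re * (star w ⬝ᵥ (A i).mulVec x).re
          = (1/2) * ∑ i, (star x ⬝ᵥ (A i).mulVec x).re
              * (2 * (star w ⬝ᵥ (A i).mulVec x).re) := by
        rw [Finset.mul_sum]
        exact Finset.sum_congr rfl fun i _ => by ring
      rw [h3, h1, mul_zero]
    have hHxw : (Hquart A x).mulVec x = w + (lam:ℂ) • x := (sub_add_cancel _ _).symm
    have h4 : (star w ⬝ᵥ w).re = 0 := by
      have h5 : star w ⬝ᵥ (Hquart A x).mulVec x = star w ⬝ᵥ w + (lam:ℂ) * (star w ⬝ᵥ x) := by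
        rw [hHxw, dotProduct_add, dotProduct_smul, smul_eq_mul]
      rw [h5, hwx, mul_zero, add_zero] at h2
      exact h2
    have hw0 : w = 0 := eq_zero_of_nu w h4
    exact sub_eq_zero.mp (hw ▸ hw0)
  refine ⟨lam, hHxx, ?_, ?_⟩
  · intro μ y hy hμ
    by_cases hμl : μ = lam
    · exact le_of_eq hμl
    have hHherm : (Hquart A x).IsHermitian := Hquart_herm A hA x
    have hxy : star x ⬝ᵥ y = 0 := by
      have e1 : star x ⬝ᵥ (Hquart A x).mulVec y = (μ:ℂ) * (star x ⬝ᵥ y) := by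
        rw [hμ, dotProduct_smul, smul_eq_mul]
      have e2 : star x ⬝ᵥ (Hquart A x).mulVec y = (lam:ℂ) * (star x ⬝ᵥ y) := by
        rw [herm_flip hHherm x y, hHxx, dotProduct_smul, smul_eq_mul, star_mul',
          ← star_dotProduct]
        simp [Complex.star_def, Complex.conj_ofReal, mul_comm]
      have e3 : ((μ:ℂ) - (lam:ℂ)) * (star x ⬝ᵥ y) = 0 := by
        rw [sub_mul, ← e1, ← e2, sub_self]
      rcases mul_eq_zero.mp e3 with h | h
      · exfalso
        apply hμl
        have : (μ:ℂ) = (lam:ℂ) := sub_eq_zero.mp h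
        exact_mod_cast this
      · exact h
    have hyx : star y ⬝ᵥ x = 0 := by rw [star_dotProduct, hxy, star_zero]
    have hk := (hkey y hyx).2
    have hνy : 0 < (star y ⬝ᵥ y).re := nu_pos y hy
    have hyHy : (star y ⬝ᵥ (Hquart A x).mulVec y).re = μ * (star y ⬝ᵥ y).re := by
      rw [hμ, dotProduct_smul, smul_eq_mul]
      simp [Complex.mul_re, Complex.ofReal_re, Complex.ofReal_im]
    have hce : ∑ i, (star x ⬝ᵥ (A i).mulVec x).re * (star y ⬝ᵥ (A i).mulVec y).re
        = μ * (star y ⬝ᵥ y).re := by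
      rw [← Hquart_dot_re, hyHy]
    have hb2 : 0 ≤ ∑ i, (2 * (star y ⬝ᵥ (A i).mulVec x).re)^2 :=
      Finset.sum_nonneg fun i _ => sq_nonneg _
    nlinarith [hk, hce, hb2, hνy]
  · simp [quartF, hlam]
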